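/- For every p > 0, m_p(1/3) = (5p+4)/(6(2p+1)) > 1/3; in particular x = 1/3 is not a fixed point of the mean residual life function m_p for any p > 0. -/

import Mathlib

open MeasureTheory Set Filter

/-- The CDF of the p-singular Cantor-type distribution: the monotone increasing
function on [0,1] with F(x/3) = F(x)/(p+1) for x ∈ [0,1] and
F(1-x) = 1 - p·F(x) for x ∈ [0,1/3]. -/
def IsCantorCDFp (p : ℝ) (F : ℝ → ℝ) : Prop :=
  Monotone F ∧
    (∀ x ∈ Set.Icc (0:ℝ) 1, F (x/3) = F x / (p+1)) ∧
    (∀ x ∈ Set.Icc (0:ℝ) (1/3), F (1-x) = 1 - p * F x)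

/-- The mean residual life function of a distribution with CDF F supported on [0,1]:
m(x) = (1/(1-F(x))) ∫_x^1 (1-F(u)) du  (equal to 0 at x = 1 by convention). -/
noncomputable def mrl (F : ℝ → ℝ) (x : ℝ) : ℝ :=
  (∫ u in x..(1:ℝ), (1 - F u)) / (1 - F x)

/-- For every p > 0, m_p(1/3) = (5p+4)/(6(2p+1)) > 1/3; in particular x = 1/3 is
not a fixed point of m_p. -/
theorem cantorp_no_fixed_point_at_third (p : ℝ) (hp : 0 < p) (F : ℝ → ℝ)
    (hF : IsCantorCDFp p F) :
    mrl F (1/3) = (5 * p + 4) / (6 * (2 * p + 1)) ∧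
      (5 * p + 4) / (6 * (2 * p + 1)) > 1/3 ∧ mrl F (1/3) ≠ 1/3 := by
  obtain ⟨hM, h1, h2⟩ := hF
  have hp1 : (p:ℝ) + 1 ≠ 0 := by linarith
  have hp1' : (0:ℝ) < p + 1 := by linarith
  -- basic values
  have F0 : F 0 = 0 := by
    have := h1 0 ⟨le_refl 0, by norm_num⟩
    simp only [zero_div] at this
    field_simp at this
    nlinarith [this]
  have F1 : F 1 = 1 := by
    have := h2 0 ⟨le_refl 0, by norm_num⟩
    simp [F0] at this
    linarith [this]
  have F13 : F (1/3) = 1 / (p+1) := by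
    have := h1 1 ⟨by norm_num, le_refl 1⟩
    rw [F1] at this
    simpa using this
  have F23 : F (2/3) = 1 / (p+1) := by
    have := h2 (1/3) ⟨by norm_num, le_refl _⟩
    norm_num [F13] at this
    rw [this]
    field_simp
    ring
  -- F is constant 1/(p+1) on [1/3, 2/3]
  have Fconst : ∀ u ∈ Set.Icc (1/3 : ℝ) (2/3), F u = 1/(p+1) := by
    intro u hu
    have h1' := hM hu.1
    have h2' := hM hu.2
    rw [F13] at h1'; rw [F23] at h2'
    linarith
  -- integrability
  have hInt : ∀ a b : ℝ, IntervalIntegrable F volume a b := fun a b => hM.intervalIntegrable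
  -- key integral values
  set A := ∫ x in (0:ℝ)..(1/3), F x with hA
  have Imid : (∫ x in (1/3:ℝ)..(2/3), F x) = 1/(3*(p+1)) := by
    rw [intervalIntegral.integral_congr (g := fun _ => 1/(p+1))
      (by intro x hx; rw [Set.uIcc_of_le (by norm_num)] at hx; exact Fconst x hx)]
    simp
    ring
  have Iright : (∫ x in (2/3:ℝ)..1, F x) = 1/3 - p * A := by
    have hsub : (∫ x in (0:ℝ)..(1/3), F (1 - x)) = ∫ x in (2/3:ℝ)..1, F x := by
      have := intervalIntegral.integral_comp_sub_left (a := (0:ℝ)) (b := 1/3) F 1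
      norm_num at this
      convert this using 2 <;> norm_num
    rw [← hsub,
      intervalIntegral.integral_congr (g := fun x => 1 - p * F x)
      (by intro x hx; rw [Set.uIcc_of_le (by norm_num)] at hx; exact h2 x hx)]
    have : (∫ x in (0:ℝ)..(1/3), (1 - p * F x)) =
        (∫ x in (0:ℝ)..(1/3), (1:ℝ)) - p * ∫ x in (0:ℝ)..(1/3), F x := by
      rw [intervalIntegral.integral_sub intervalIntegrable_const
        ((hInt 0 (1/3)).const_mul p), intervalIntegral.integral_const_mul]
    rw [this]
    simp [hA]
  have Ileft : A = (1/(3*(p+1))) * ∫ x in (0:ℝ)..1, F x := by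
    have hcong : A = ∫ x in (0:ℝ)..(1/3), F (3*x) / (p+1) := by
      rw [hA]
      apply intervalIntegral.integral_congr
      intro x hx
      rw [Set.uIcc_of_le (by norm_num)] at hx
      have := h1 (3*x) ⟨by linarith [hx.1], by linarith [hx.2]⟩
      have h3 : 3 * x / 3 = x := by ring
      rw [h3] at this
      exact this
    have hdiv : (∫ x in (0:ℝ)..(1/3), F (3*x) / (p+1)) =
        (∫ x in (0:ℝ)..(1/3), F (3*x)) / (p+1) := by
      rw [intervalIntegral.integral_div]
    have hcomp : (∫ x in (0:ℝ)..(1/3), F (3*x)) = (3:ℝ)⁻¹ * ∫ x in (0:ℝ)..1, F x := by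
      have := intervalIntegral.integral_comp_mul_left (a := (0:ℝ)) (b := 1/3) F
        (c := 3) (by norm_num)
      norm_num at this ⊢
    rw [hcong, hdiv, hcomp]
    field_simp
  have Itot : (∫ x in (0:ℝ)..1, F x) =
      A + (1/(3*(p+1))) + (1/3 - p * A) := by
    have s1 := intervalIntegral.integral_add_adjacent_intervals (hInt 0 (1/3)) (hInt (1/3) 1)
    have s2 := intervalIntegral.integral_add_adjacent_intervals (hInt (1/3) (2/3)) (hInt (2/3) 1)
    rw [Imid, Iright] at s2
    rw [hA]
    linarith [s1, s2]
  -- solve for A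
  have hAval : A = (p + 2) / (6 * (p+1) * (2*p+1)) := by
    rw [Itot] at Ileft
    have h2p1 : (2*p+1:ℝ) ≠ 0 := by positivity
    field_simp at Ileft ⊢
    nlinarith [Ileft]
  -- numerator
  have hnum : (∫ u in (1/3:ℝ)..1, (1 - F u)) = p * (5*p+4) / (6*(p+1)*(2*p+1)) := by
    have hsplit : (∫ u in (1/3:ℝ)..1, (1 - F u)) =
        (∫ u in (1/3:ℝ)..1, (1:ℝ)) - ∫ u in (1/3:ℝ)..1, F u := by
      rw [intervalIntegral.integral_sub intervalIntegrable_const (hInt (1/3) 1)]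
    have hF13to1 : (∫ u in (1/3:ℝ)..1, F u) = 1/(3*(p+1)) + (1/3 - p * A) := by
      rw [← Imid, ← Iright,
        intervalIntegral.integral_add_adjacent_intervals (hInt (1/3) (2/3)) (hInt (2/3) 1)]
    rw [hsplit, hF13to1, hAval]
    simp
    field_simp
    ring
  have hden : 1 - F (1/3) = p / (p+1) := by rw [F13]; field_simp; ring
  have hmrl : mrl F (1/3) = (5 * p + 4) / (6 * (2 * p + 1)) := by
    rw [mrl, hnum, hden]
    have h2p1 : (2*p+1:ℝ) ≠ 0 := by positivity
    field_simp
  refine ⟨hmrl, ?_, ?_⟩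
  · rw [gt_iff_lt, div_lt_div_iff₀ (by norm_num) (by positivity)]
    nlinarith
  · rw [hmrl]
    intro h
    rw [div_eq_div_iff (by positivity) (by norm_num)] at h
    nlinarith
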